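/- Let G be a graph with list assignment L, colour set C, and λ = |V(G)|−|C| ≥ 1. Call a colour c frequent if |L^{-1}(c)| ≥ k+2, or |L^{-1}(c) ∩ T| ≥ λ, or (|T| = λ−1 ≥ 1 and T ⊆ L^{-1}(c)), where T is the set of vertices in singleton parts. In a minimal counterexample setting (G complete k-partite, 2k+2 vertices, not L-colourable, all auxiliary lemmas available), if G has a near-acceptable L-colouring (a pseudo-L-colouring in which every badly coloured vertex receives a frequent colour), then G has a proper L-colouring. -/

import Mathlib

open Finset

/-- Lemma 6.1 (lem-near): in the minimum counterexample setting (`G` complete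
`k`-partite on `2k+2` vertices, `k`-lists, `λ = |V| − |C| ≥ 1`), assuming the paper's
auxiliary lemmas (at most `λ−1` singleton parts outside a maximum Hall violator of the
availability graph of any pseudo-`L`-colouring, at most `λ−2` if `G` has exactly
`λ−1 ≥ 1` singleton parts and `λ ≥ 2`, and empty list intersection on every part of
size ≥ 2), if `G` has a near-acceptable `L`-colouring (a pseudo-`L`-colouring whose
badly coloured vertices all receive frequent colours), then `G` has a proper
`L`-colouring. -/
theorem stmt_13 {V : Type*} [Fintype V] [DecidableEq V]
    (k : ℕ) (p : V → Fin k) (hsurj : Function.Surjective p)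
    (hcard : Fintype.card V = 2 * k + 2)
    (L : V → Finset ℕ) (hL : ∀ v, k ≤ (L v).card)
    (lam : ℕ) (hlam : (univ.biUnion L).card + lam = 2 * k + 2) (hlam1 : 1 ≤ lam)
    -- auxiliary lemma: at most λ−1 singleton parts outside a maximum Hall violator,
    -- and at most λ−2 of them if G has exactly λ−1 ≥ 1 singleton parts and λ ≥ 2
    (haux : ∀ f' : V → ℕ, (∀ u v, p u ≠ p v → f' u ≠ f' v) →
      (∀ c : ℕ, 2 ≤ (univ.filter fun v => f' v = c).card → ∀ v, f' v = c → c ∈ L v) →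
      ∀ X ⊆ univ.image f',
        (X.biUnion fun c => (univ.biUnion L).filter
          fun c' => ∀ v, f' v = c → c' ∈ L v).card < X.card →
        (∀ X' ⊆ univ.image f',
          X'.card - (X'.biUnion fun c => (univ.biUnion L).filter
            fun c' => ∀ v, f' v = c → c' ∈ L v).card ≤
          X.card - (X.biUnion fun c => (univ.biUnion L).filter
            fun c' => ∀ v, f' v = c → c' ∈ L v).card) →
        ((((univ.image f') \ X).filter fun c =>
            ∃ v : V, (univ.filter fun w => f' w = c) = {v} ∧
              (univ.filter fun w => p w = p v) = {v}).card ≤ lam - 1 ∧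
         ((univ.filter fun v : V =>
              (univ.filter fun w => p w = p v) = {v}).card = lam - 1 → 2 ≤ lam →
            (((univ.image f') \ X).filter fun c =>
              ∃ v : V, (univ.filter fun w => f' w = c) = {v} ∧
                (univ.filter fun w => p w = p v) = {v}).card ≤ lam - 2)))
    -- auxiliary lemma: every part of size at least 2 has empty list intersection
    (hparts : ∀ i : Fin k, 2 ≤ (univ.filter fun v => p v = i).card →
      ¬ ∃ c : ℕ, ∀ v, p v = i → c ∈ L v)
    -- a near-acceptable L-colouring
    (f : V → ℕ)
    (hproper : ∀ u v, p u ≠ p v → f u ≠ f v)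
    (hpseudo : ∀ c : ℕ, 2 ≤ (univ.filter fun v => f v = c).card →
      ∀ v, f v = c → c ∈ L v)
    (hrange : ∀ v, f v ∈ univ.biUnion L)
    (hfreq : ∀ v, f v ∉ L v →
      (k + 2 ≤ (univ.filter fun w => f v ∈ L w).card ∨
       lam ≤ ((univ.filter fun w : V =>
          (univ.filter fun u => p u = p w) = {w}).filter fun w => f v ∈ L w).card ∨
       ((univ.filter fun w : V =>
            (univ.filter fun u => p u = p w) = {w}).card = lam - 1 ∧ 1 ≤ lam - 1 ∧
          ∀ w ∈ univ.filter fun w : V =>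
            (univ.filter fun u => p u = p w) = {w}, f v ∈ L w))) :
    ∃ g : V → ℕ, (∀ u v, p u ≠ p v → g u ≠ g v) ∧ ∀ v, g v ∈ L v := by
  classical
  -- singleton parts give singleton colour classes
  have hTclass : ∀ w : V, (univ.filter fun u => p u = p w) = {w} →
      (univ.filter fun x => f x = f w) = {w} := by
    intro w hw
    ext x
    simp only [mem_filter, mem_univ, true_and, mem_singleton]
    constructor
    · intro hx
      by_cases hpp : p x = p w
      · have hx2 : x ∈ univ.filter fun u => p u = p w := by
          simp [hpp]
        rwa [hw, mem_singleton] at hx2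
      · exact absurd hx (hproper x w hpp)
    · rintro rfl; rfl
  -- pick a maximum-deficiency subset of the colours used by `f`
  obtain ⟨X₀, hX₀mem, hX₀max⟩ :=
    Finset.exists_max_image ((univ.image f).powerset)
      (fun X => X.card - (X.biUnion fun c => (univ.biUnion L).filter
        fun c' => ∀ v, f v = c → c' ∈ L v).card)
      ⟨∅, Finset.empty_mem_powerset _⟩
  have hX₀sub : X₀ ⊆ univ.image f := Finset.mem_powerset.mp hX₀mem
  by_cases h0 : (X₀.biUnion fun c => (univ.biUnion L).filter
      fun c' => ∀ v, f v = c → c' ∈ L v).card < X₀.card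
  · -- a Hall violator exists: derive a contradiction using `haux` and `hfreq`
    exfalso
    have hmax' : ∀ X' ⊆ univ.image f,
        X'.card - (X'.biUnion fun c => (univ.biUnion L).filter
          fun c' => ∀ v, f v = c → c' ∈ L v).card ≤
        X₀.card - (X₀.biUnion fun c => (univ.biUnion L).filter
          fun c' => ∀ v, f v = c → c' ∈ L v).card :=
      fun X' h => hX₀max X' (Finset.mem_powerset.mpr h)
    obtain ⟨hcl1, hcl2⟩ := haux f hproper hpseudo X₀ hX₀sub h0 hmax'
    -- main claim: every colour of X₀ lies in the union of availability sets of X₀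
    have hsub : X₀ ⊆ X₀.biUnion fun c => (univ.biUnion L).filter
        fun c' => ∀ v, f v = c → c' ∈ L v := by
      intro c hc
      have hcim : c ∈ univ.image f := hX₀sub hc
      obtain ⟨v0, -, hv0⟩ := mem_image.mp hcim
      by_cases hgood : ∀ x, f x = c → c ∈ L x
      · exact mem_biUnion.mpr ⟨c, hc, mem_filter.mpr
          ⟨mem_biUnion.mpr ⟨v0, mem_univ _, hgood v0 hv0⟩, hgood⟩⟩
      · push_neg at hgood
        obtain ⟨v, hfv, hbad⟩ := hgood
        -- the colour class of c is exactly {v}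
        have hcv : ∀ x, f x = c → x = v := by
          intro x hx
          by_contra hne
          have h2 : ({x, v} : Finset V) ⊆ univ.filter fun y => f y = c := by
            intro y hy
            rcases mem_insert.mp hy with rfl | hy
            · simp [hx]
            · rw [mem_singleton] at hy; subst hy; simp [hfv]
          have hcard2 : 2 ≤ (univ.filter fun y => f y = c).card := by
            have := Finset.card_le_card h2
            rwa [Finset.card_pair hne] at this
          exact hbad (hpseudo c hcard2 v hfv)
        have hcC : c ∈ univ.biUnion L := hfv ▸ hrange v
        have hbad' : f v ∉ L v := by rw [hfv]; exact hbad
        -- find a colour c₀ ∈ X₀ whose whole class has c in its lists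
        have hkey : ∃ c₀ ∈ X₀, ∀ x, f x = c₀ → c ∈ L x := by
          rcases hfreq v hbad' with h1 | h2 | ⟨hT1, hT2, hT3⟩
          · -- c appears in at least k+2 lists
            rw [hfv] at h1
            by_contra hno
            push_neg at hno
            -- each colour of X₀ has a class member avoiding c; these are distinct
            have hle : X₀.card ≤ (univ.filter fun x => c ∉ L x).card := by
              apply Finset.card_le_card_of_injOn
                (fun c₀ => if h : ∃ x : V, f x = c₀ ∧ c ∉ L x then h.choose else v)
              · intro c₀ hc₀
                have h := hno c₀ hc₀
                simp only [dif_pos h]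
                simp [h.choose_spec.2]
              · intro a ha b hb hab
                have hA := hno a (mem_coe.mp ha)
                have hB := hno b (mem_coe.mp hb)
                simp only [dif_pos hA, dif_pos hB] at hab
                rw [← hA.choose_spec.1, ← hB.choose_spec.1, hab]
            have hcompl : (univ.filter fun x => c ∈ L x).card +
                (univ.filter fun x => ¬ c ∈ L x).card = Fintype.card V := by
              rw [Finset.card_filter_add_card_filter_not, card_univ]
            -- availability of class {v} is at least k
            have hLvA : L v ⊆ (univ.biUnion L).filter
                fun c' => ∀ x, f x = c → c' ∈ L x := by
              intro c' hc'
              refine mem_filter.mpr ⟨mem_biUnion.mpr ⟨v, mem_univ v, hc'⟩, ?_⟩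
              intro x hx
              rw [hcv x hx]; exact hc'
            have hk : k ≤ (X₀.biUnion fun c => (univ.biUnion L).filter
                fun c' => ∀ v, f v = c → c' ∈ L v).card := by
              refine le_trans (le_trans (hL v) (Finset.card_le_card hLvA))
                (Finset.card_le_card ?_)
              exact Finset.subset_biUnion_of_mem
                (fun c => (univ.biUnion L).filter fun c' => ∀ v, f v = c → c' ∈ L v) hc
            omega
          · -- at least λ singleton parts have c in their lists
            rw [hfv] at h2
            by_contra hno
            push_neg at hno
            have hout : ∀ w ∈ (univ.filter fun w : V =>
                (univ.filter fun u => p u = p w) = {w}).filter fun w => c ∈ L w,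
                f w ∉ X₀ := by
              intro w hw hwX
              obtain ⟨x, hx1, hx2⟩ := hno (f w) hwX
              have hw' := mem_filter.mp hw
              have hx3 : x ∈ univ.filter fun y => f y = f w := by simp [hx1]
              rw [hTclass w (mem_filter.mp hw'.1).2, mem_singleton] at hx3
              subst hx3
              exact hx2 hw'.2
            have hle : ((univ.filter fun w : V =>
                (univ.filter fun u => p u = p w) = {w}).filter fun w => c ∈ L w).card ≤
                (((univ.image f) \ X₀).filter fun c =>
                  ∃ v : V, (univ.filter fun w => f w = c) = {v} ∧
                    (univ.filter fun w => p w = p v) = {v}).card := by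
              apply Finset.card_le_card_of_injOn f
              · intro w hw
                have hw' := mem_filter.mp hw
                have hsing := (mem_filter.mp hw'.1).2
                refine mem_filter.mpr ⟨mem_sdiff.mpr
                  ⟨mem_image_of_mem f (mem_univ w), hout w hw⟩, ⟨w, ?_, hsing⟩⟩
                exact hTclass w hsing
              · intro a ha b hb hab
                have ha' := mem_filter.mp (mem_coe.mp ha)
                have hb3 : b ∈ univ.filter fun y => f y = f a := by simp [hab.symm]
                rw [hTclass a (mem_filter.mp ha'.1).2, mem_singleton] at hb3
                exact hb3.symm
            omega
          · -- exactly λ−1 ≥ 1 singleton parts, all containing c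
            rw [hfv] at hT3
            have hcl2' := hcl2 hT1 (by omega)
            by_contra hno
            push_neg at hno
            have hout : ∀ w ∈ univ.filter fun w : V =>
                (univ.filter fun u => p u = p w) = {w}, f w ∉ X₀ := by
              intro w hw hwX
              obtain ⟨x, hx1, hx2⟩ := hno (f w) hwX
              have hx3 : x ∈ univ.filter fun y => f y = f w := by simp [hx1]
              rw [hTclass w (mem_filter.mp hw).2, mem_singleton] at hx3
              subst hx3
              exact hx2 (hT3 _ hw)
            have hle : (univ.filter fun w : V =>
                (univ.filter fun u => p u = p w) = {w}).card ≤
                (((univ.image f) \ X₀).filter fun c =>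
                  ∃ v : V, (univ.filter fun w => f w = c) = {v} ∧
                    (univ.filter fun w => p w = p v) = {v}).card := by
              apply Finset.card_le_card_of_injOn f
              · intro w hw
                have hsing := (mem_filter.mp hw).2
                refine mem_filter.mpr ⟨mem_sdiff.mpr
                  ⟨mem_image_of_mem f (mem_univ w), hout w hw⟩, ⟨w, ?_, hsing⟩⟩
                exact hTclass w hsing
              · intro a ha b hb hab
                have ha' := mem_filter.mp (mem_coe.mp ha)
                have hb3 : b ∈ univ.filter fun y => f y = f a := by simp [hab.symm]
                rw [hTclass a ha'.2, mem_singleton] at hb3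
                exact hb3.symm
            omega
        obtain ⟨c₀, hc₀X, hc₀⟩ := hkey
        exact mem_biUnion.mpr ⟨c₀, hc₀X, mem_filter.mpr ⟨hcC, hc₀⟩⟩
    exact absurd (Finset.card_le_card hsub) (not_le.mpr h0)
  · -- Hall's condition holds: extract a system of distinct representatives
    have h4 : X₀.card - (X₀.biUnion fun c => (univ.biUnion L).filter
        fun c' => ∀ v, f v = c → c' ∈ L v).card = 0 :=
      Nat.sub_eq_zero_of_le (not_lt.mp h0)
    have hHall : ∀ s : Finset {c // c ∈ univ.image f},
        s.card ≤ (s.biUnion fun c => (univ.biUnion L).filter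
          fun c' => ∀ v, f v = c.1 → c' ∈ L v).card := by
      intro s
      have hs : s.image Subtype.val ⊆ univ.image f := by
        intro c hc
        obtain ⟨x, hx, rfl⟩ := mem_image.mp hc
        exact x.2
      have h3 := hX₀max (s.image Subtype.val) (Finset.mem_powerset.mpr hs)
      rw [h4, Nat.le_zero, Nat.sub_eq_zero_iff_le] at h3
      calc s.card = (s.image Subtype.val).card :=
            (Finset.card_image_of_injective s Subtype.val_injective).symm
        _ ≤ ((s.image Subtype.val).biUnion fun c => (univ.biUnion L).filter
              fun c' => ∀ v, f v = c → c' ∈ L v).card := h3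
        _ = (s.biUnion fun c => (univ.biUnion L).filter
              fun c' => ∀ v, f v = c.1 → c' ∈ L v).card := by
            rw [Finset.image_biUnion]
    obtain ⟨φ, hinj, hφ⟩ :=
      (Finset.all_card_le_biUnion_card_iff_exists_injective
        (fun c : {c // c ∈ univ.image f} => (univ.biUnion L).filter
          fun c' => ∀ v, f v = c.1 → c' ∈ L v)).mp hHall
    refine ⟨fun v => φ ⟨f v, mem_image_of_mem f (mem_univ v)⟩, ?_, ?_⟩
    · intro u v hpuv h
      exact hproper u v hpuv (congrArg Subtype.val (hinj h))
    · intro v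
      have := hφ ⟨f v, mem_image_of_mem f (mem_univ v)⟩
      exact (mem_filter.mp this).2 v rfl
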